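/- Noether-type factorization of a map of short exact sequences: in an abelian category, any map of short exact sequences (f', f, f'') from 0 → A → E → B → 0 to 0 → C → F → D → 0 factors through a short exact sequence 0 → C → Z → B → 0, where Z is the pushout of E ← A → C, the map E → Z makes the left square a pushout, and Z → F makes the right square (with B → D) a pullback. -/

import Mathlib

open CategoryTheory Limits

/-- Noether-type factorization of a map of short exact sequences: any map
`φ : S₁ ⟶ S₂` of short exact sequences `0 → A → E → B → 0` and
`0 → C → F → D → 0` factors through a short exact sequence `0 → C → Z → B → 0`,
where `Z` is the pushout of `E ← A → C`, the left square is a pushout and the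
right square (with `B → D`) is a pullback. -/
theorem stmt_4 {𝒞 : Type*} [Category 𝒞] [Abelian 𝒞]
    (S₁ S₂ : ShortComplex 𝒞) (hS₁ : S₁.ShortExact) (hS₂ : S₂.ShortExact)
    (φ : S₁ ⟶ S₂) :
    ∃ (Z : 𝒞) (j : S₂.X₁ ⟶ Z) (q : Z ⟶ S₁.X₃) (w : j ≫ q = 0)
      (g : S₁.X₂ ⟶ Z) (h : Z ⟶ S₂.X₂),
      (ShortComplex.mk j q w).ShortExact ∧
      IsPushout S₁.f φ.τ₁ g j ∧
      IsPullback h q S₂.g φ.τ₃ ∧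
      g ≫ q = S₁.g ∧
      j ≫ h = S₂.f ∧
      g ≫ h = φ.τ₂ := by
  have hmf₁ : Mono S₁.f := hS₁.mono_f
  have heg₁ : Epi S₁.g := hS₁.epi_g
  have hmf₂ : Mono S₂.f := hS₂.mono_f
  have heg₂ : Epi S₂.g := hS₂.epi_g
  -- the pushout
  let Z := pushout S₁.f φ.τ₁
  let g : S₁.X₂ ⟶ Z := pushout.inl _ _
  let j : S₂.X₁ ⟶ Z := pushout.inr _ _
  let q : Z ⟶ S₁.X₃ := pushout.desc S₁.g 0 (by simp)
  have hgq : g ≫ q = S₁.g := pushout.inl_desc _ _ _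
  have w : j ≫ q = 0 := pushout.inr_desc _ _ _
  let h : Z ⟶ S₂.X₂ := pushout.desc φ.τ₂ S₂.f φ.comm₁₂.symm
  have hgh : g ≫ h = φ.τ₂ := pushout.inl_desc _ _ _
  have hjh : j ≫ h = S₂.f := pushout.inr_desc _ _ _
  have hmj : Mono j := Abelian.mono_pushout_of_mono_f _ _
  have heq : Epi q := by
    have : Epi (g ≫ q) := by rw [hgq]; infer_instance
    exact epi_of_epi g q
  -- q is a cokernel of j
  have hcoker : IsColimit (CokernelCofork.ofπ q w) := by
    let desc : ∀ {W : 𝒞} (c : Z ⟶ W), j ≫ c = 0 → (S₁.X₃ ⟶ W) := fun {W} c hc =>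
      hS₁.gIsCokernel.desc (CokernelCofork.ofπ (g ≫ c)
        (by rw [← Category.assoc, IsPushout.of_hasPushout S₁.f φ.τ₁ |>.w,
          Category.assoc, hc, comp_zero]))
    have fac : ∀ {W : 𝒞} (c : Z ⟶ W) (hc : j ≫ c = 0), q ≫ desc c hc = c := by
      intro W c hc
      apply pushout.hom_ext
      · rw [← Category.assoc]
        rw [show (g : S₁.X₂ ⟶ Z) ≫ q = S₁.g from hgq]
        exact hS₁.gIsCokernel.fac _ WalkingParallelPair.one
      · rw [← Category.assoc, show (j : S₂.X₁ ⟶ Z) ≫ q = 0 from w, zero_comp, hc]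
    refine CokernelCofork.IsColimit.ofπ _ _ (fun {W} c hc => desc c hc) fac ?_
    · intro W c hc m hm
      have : Epi q := heq
      rw [← cancel_epi q, hm, fac]
      exact hc
  -- short exactness of mk j q
  have hSE : (ShortComplex.mk j q w).ShortExact := by
    refine ShortComplex.ShortExact.mk' ?_ hmj heq
    exact ShortComplex.exact_of_g_is_cokernel _ hcoker
  -- the pullback comparison
  have hsq : h ≫ S₂.g = q ≫ φ.τ₃ := by
    apply pushout.hom_ext
    · simp only [← Category.assoc]
      rw [show (g : S₁.X₂ ⟶ Z) ≫ h = φ.τ₂ from hgh, hgq, φ.comm₂₃]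
    · simp only [← Category.assoc]
      rw [show (j : S₂.X₁ ⟶ Z) ≫ h = S₂.f from hjh, w, zero_comp, S₂.zero]
  -- the actual pullback
  let P := pullback S₂.g φ.τ₃
  let p₁ : P ⟶ S₂.X₂ := pullback.fst _ _
  let p₂ : P ⟶ S₁.X₃ := pullback.snd _ _
  let e : S₂.X₁ ⟶ P := pullback.lift S₂.f 0 (by simp)
  have hep₂ : e ≫ p₂ = 0 := pullback.lift_snd _ _ _
  have hep₁ : e ≫ p₁ = S₂.f := pullback.lift_fst _ _ _
  have hme : Mono e := by
    have : Mono (e ≫ p₁) := by rw [hep₁]; infer_instance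
    exact mono_of_mono e p₁
  have hep : Epi p₂ := Abelian.epi_pullback_of_epi_f _ _
  have hker : IsLimit (KernelFork.ofι e hep₂) := by
    let lift : ∀ {W : 𝒞} (c : W ⟶ P), c ≫ p₂ = 0 → (W ⟶ S₂.X₁) := fun {W} c hc =>
      hS₂.fIsKernel.lift (KernelFork.ofι (c ≫ p₁)
        (by rw [Category.assoc, pullback.condition, ← Category.assoc, hc, zero_comp]))
    have fac : ∀ {W : 𝒞} (c : W ⟶ P) (hc : c ≫ p₂ = 0), lift c hc ≫ e = c := by
      intro W c hc
      apply pullback.hom_ext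
      · rw [Category.assoc, hep₁]
        exact hS₂.fIsKernel.fac _ WalkingParallelPair.zero
      · rw [Category.assoc, hep₂, comp_zero, hc]
    refine KernelFork.IsLimit.ofι _ _ (fun {W} c hc => lift c hc) fac ?_
    · intro W c hc m hm
      rw [← cancel_mono e, hm, fac]
      exact hc
  have hSE' : (ShortComplex.mk e p₂ hep₂).ShortExact := by
    refine ShortComplex.ShortExact.mk' ?_ hme hep
    exact ShortComplex.exact_of_f_is_kernel _ hker
  let k : Z ⟶ P := pullback.lift h q hsq
  have hkp₁ : k ≫ p₁ = h := pullback.lift_fst _ _ _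
  have hkp₂ : k ≫ p₂ = q := pullback.lift_snd _ _ _
  let ψ : ShortComplex.mk j q w ⟶ ShortComplex.mk e p₂ hep₂ :=
    ShortComplex.Hom.mk (𝟙 _) k (𝟙 _)
      (by
        dsimp
        rw [Category.id_comp]
        apply pullback.hom_ext
        · rw [hep₁, Category.assoc, hkp₁, hjh]
        · rw [hep₂, Category.assoc, hkp₂, w])
      (by dsimp; rw [Category.comp_id, hkp₂])
  have : IsIso ψ.τ₂ := ShortComplex.isIso₂_of_shortExact_of_isIso₁₃ ψ hSE hSE'
  have hkiso : IsIso k := this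
  have hpb : IsPullback h q S₂.g φ.τ₃ := by
    refine IsPullback.of_iso_pullback ⟨hsq⟩ (asIso k) hkp₁ hkp₂
  exact ⟨Z, j, q, w, g, h, hSE, IsPushout.of_hasPushout _ _, hpb, hgq, hjh, hgh⟩
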